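/- Let m = 6j−1 be prime and let n ≡ 0 (mod 6m) be positive. Then the statistic c(λ) = (λ₁ − λ₃) mod m takes each value in {0,1,...,m−1} on exactly p(n,3)/m partitions λ of n into exactly 3 positive parts. -/

import Mathlib

open Finset

/-- The set of partitions of `n` into exactly 3 positive parts, as triples
`(a, b, c)` with `a ≥ b ≥ c ≥ 1` and `a + b + c = n`. -/
def P3 (n : ℕ) : Finset (ℕ × ℕ × ℕ) :=
  (Finset.range (n+1) ×ˢ Finset.range (n+1) ×ˢ Finset.range (n+1)).filter
    (fun t => t.2.1 ≤ t.1 ∧ t.2.2 ≤ t.2.1 ∧ 1 ≤ t.2.2 ∧ t.1 + t.2.1 + t.2.2 = n)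

/-- `p3 n` is the number of partitions of `n` into exactly 3 positive parts. -/
def p3 (n : ℕ) : ℕ := (P3 n).card

def Q (n m i : ℕ) : Finset (ℕ × ℕ) :=
  ((Finset.range (n+1)) ×ˢ (Finset.range (n+1))).filter
    (fun p => 1 ≤ p.2 ∧ 2*p.1 + 3*p.2 ≤ n ∧ (p.1 + 3*p.2 + i) % m = 0)


lemma exists_sol (m u w : ℕ) (hm : m.Prime) (hu : ¬ m ∣ u) :
    ∃ d < m, (u * d + w) % m = 0 := by
  haveI : Fact m.Prime := ⟨hm⟩
  have hu' : (u : ZMod m) ≠ 0 := by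
    simpa [ZMod.natCast_eq_zero_iff] using hu
  refine ⟨((-(w : ZMod m)) * (u : ZMod m)⁻¹).val, ZMod.val_lt _, ?_⟩
  rw [← Nat.dvd_iff_mod_eq_zero, ← ZMod.natCast_eq_zero_iff]
  push_cast
  rw [ZMod.natCast_val, ZMod.cast_id]
  field_simp
  ring

lemma uniq_sol (m u w : ℕ) (hm : m.Prime) (hu : ¬ m ∣ u) {x y : ℕ}
    (hx : (u*x+w) % m = 0) (hy : (u*y+w) % m = 0) (hxy : x ≤ y) (hyx : y < x + m) :
    y = x := by
  have h1 : m ∣ (u*y+w) - (u*x+w) := Nat.dvd_sub (Nat.dvd_iff_mod_eq_zero.mpr hy) (Nat.dvd_iff_mod_eq_zero.mpr hx)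
  have h2 : (u*y+w) - (u*x+w) = u*(y-x) := by rw [Nat.mul_sub]; omega
  rw [h2] at h1
  rcases (Nat.Prime.dvd_mul hm).mp h1 with h | h
  · exact absurd h hu
  · rcases Nat.eq_zero_or_pos (y - x) with h0 | h0
    · omega
    · have := Nat.le_of_dvd h0 h; omega

lemma count_sol (m u w : ℕ) (hm : m.Prime) (hu : ¬ m ∣ u) (T : ℕ) :
    ((range (m*T)).filter (fun d => (u*d+w) % m = 0)).card = T := by
  induction T with
  | zero => simp
  | succ T ih =>
    obtain ⟨d₀, hd₀m, hd₀⟩ := exists_sol m u w hm hu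
    have hmono : m*T ≤ m*(T+1) := Nat.mul_le_mul_left m (Nat.le_succ T)
    have hsplit : range (m*(T+1)) = range (m*T) ∪ Ico (m*T) (m*(T+1)) := by
      rw [range_eq_Ico, range_eq_Ico]
      exact (Finset.Ico_union_Ico_eq_Ico (Nat.zero_le _) hmono).symm
    have hdisj : Disjoint (range (m*T)) (Ico (m*T) (m*(T+1))) := by
      simp only [Finset.disjoint_left, Finset.mem_range, Finset.mem_Ico]
      omega
    rw [hsplit, filter_union, card_union_of_disjoint (Finset.disjoint_filter_filter hdisj), ih]
    have hmul : m*(T+1) = m*T + m := by ring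
    have hs : (u*(d₀ + m*T) + w) % m = 0 := by
      have h : u*(d₀ + m*T) + w = (u*d₀ + w) + m*(u*T) := by ring
      rw [h, Nat.add_mul_mod_self_left, hd₀]
    have hwin : (Ico (m*T) (m*(T+1))).filter (fun d => (u*d+w) % m = 0) = {d₀ + m*T} := by
      ext x
      simp only [mem_filter, mem_Ico, mem_singleton]
      constructor
      · rintro ⟨⟨h1, h2⟩, h3⟩
        rcases le_total x (d₀ + m*T) with hle | hle
        · exact (uniq_sol m u w hm hu h3 hs hle (by omega)).symm
        · exact uniq_sol m u w hm hu hs h3 hle (by omega)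
      · rintro rfl
        exact ⟨⟨Nat.le_add_left _ _, by omega⟩, hs⟩
    rw [hwin]
    simp




lemma keyiff (m i A B n : ℕ) (him : i < m) (hn : m ∣ n) (h : A + B = n) :
    (A % m = i ↔ (B + i) % m = 0) := by
  have hi' : i % m = i := Nat.mod_eq_of_lt him
  have hn0 : n ≡ 0 [MOD m] := (Nat.modEq_zero_iff_dvd).mpr hn
  constructor
  · intro hA
    have h1 : A ≡ i [MOD m] := by unfold Nat.ModEq; rw [hA, hi']
    have h3 : B + A ≡ 0 [MOD m] := by rw [show B + A = n by omega]; exact hn0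
    have h2 : B + i ≡ 0 [MOD m] := (Nat.ModEq.add_left B h1).symm.trans h3
    simpa [Nat.ModEq] using h2
  · intro hB
    have h1 : B + i ≡ 0 [MOD m] := by simpa [Nat.ModEq] using hB
    have h2 : A + (B + i) ≡ A + 0 [MOD m] := Nat.ModEq.add_left A h1
    have h5 : A ≡ n + i [MOD m] := by
      have h6 := h2.symm
      rw [show A + (B + i) = n + i by omega, Nat.add_zero] at h6
      exact h6
    have h6 : n + i ≡ i [MOD m] := by
      have := Nat.ModEq.add_right i hn0
      simpa using this
    have h7 := h5.trans h6
    simpa [Nat.ModEq, hi'] using h7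

lemma cardA (n m i : ℕ) (him : i < m) (hmn : m ∣ n) :
    ((P3 n).filter (fun t => (t.1 - t.2.2) % m = i)).card = (Q n m i).card := by
  apply Finset.card_bij (fun t _ => (t.2.1 - t.2.2, t.2.2))
  · rintro ⟨a, b, c⟩ ht
    rw [Finset.mem_filter] at ht
    obtain ⟨hP, hstat⟩ := ht
    simp only [P3, mem_filter, mem_product, mem_range] at hP
    obtain ⟨⟨ha, hb, hc⟩, hba, hcb, hc1, hsum⟩ := hP
    simp only [Q, mem_filter, mem_product, mem_range]
    refine ⟨⟨by omega, by omega⟩, by omega, by omega, ?_⟩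
    have hk := (keyiff m i (a - c) ((b - c) + 3*c) n him hmn (by omega)).mp hstat
    rw [show b - c + 3*c + i = ((b-c) + 3*c) + i from rfl]
    exact hk
  · rintro ⟨a, b, c⟩ ht ⟨a', b', c'⟩ ht' heq
    rw [Finset.mem_filter] at ht ht'
    simp only [P3, mem_filter, mem_product, mem_range] at ht ht'
    obtain ⟨⟨⟨_, _, _⟩, _, _, _, hs⟩, _⟩ := ht
    obtain ⟨⟨⟨_, _, _⟩, _, _, _, hs'⟩, _⟩ := ht'
    simp only [Prod.mk.injEq] at heq ⊢
    refine ⟨?_, ?_, ?_⟩ <;> omega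
  · rintro ⟨y, c⟩ hq
    simp only [Q, mem_filter, mem_product, mem_range] at hq
    obtain ⟨⟨hy, hc⟩, hc1, hle, hmod⟩ := hq
    refine ⟨(n - (y + 2*c), y + c, c), ?_, ?_⟩
    · rw [Finset.mem_filter]
      constructor
      · simp only [P3, mem_filter, mem_product, mem_range]
        refine ⟨⟨by omega, by omega, by omega⟩, by omega, by omega, by omega, by omega⟩
      · show (n - (y + 2*c) - c) % m = i
        rw [show n - (y + 2*c) - c = n - (y + 3*c) by omega]
        exact (keyiff m i (n - (y + 3*c)) (y + 3*c) n him hmn (by omega)).mpr hmod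
    · show (y + c - c, c) = (y, c)
      rw [show y + c - c = y by omega]




lemma step (m j t i : ℕ) (hm : m.Prime) (hj : m = 6*j-1) (hj1 : 1 ≤ j) :
    (Q (6*(m*t)) m i).card = (Q (6*(m*t)) m (i+1)).card := by
  have hm5 : 5 ≤ m := by omega
  have hnd3 : ¬ m ∣ 3 := fun h => by have := Nat.le_of_dvd (by norm_num) h; omega
  set K := m*t with hKdef
  set n := 6*K with hndef
  have hshift : ∀ X, (3*K + X) % m = X % m := by
    intro X
    have : 3*K + X = m*(3*t) + X := by rw [hKdef]; ring
    rw [this, Nat.mul_add_mod]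
  have h2t : m*(2*t) = 2*K := by rw [hKdef]; ring
  -- interior bijection
  have hpos : ((Q n m i).filter (fun p => ¬ p.1 = 0)).card
            = ((Q n m (i+1)).filter (fun p => 2*p.1+3*p.2+2 ≤ n)).card := by
    apply Finset.card_bij (fun p _ => (p.1 - 1, p.2))
    · rintro ⟨y, c⟩ hp
      simp only [Q, mem_filter, mem_product, mem_range] at hp ⊢
      obtain ⟨⟨⟨hy, hc⟩, hc1, hle, hmod⟩, hy0⟩ := hp
      refine ⟨⟨⟨by omega, by omega⟩, by omega, by omega, ?_⟩, by omega⟩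
      rw [show y - 1 + 3*c + (i+1) = y + 3*c + i by omega]
      exact hmod
    · rintro ⟨y, c⟩ hp ⟨y', c'⟩ hp' heq
      simp only [Q, mem_filter, mem_product, mem_range] at hp hp'
      simp only [Prod.mk.injEq] at heq ⊢
      obtain ⟨_, hy0⟩ := hp
      obtain ⟨_, hy0'⟩ := hp'
      omega
    · rintro ⟨x, c⟩ hq
      simp only [Q, mem_filter, mem_product, mem_range] at hq
      obtain ⟨⟨⟨hx, hc⟩, hc1, hle, hmod⟩, hsm⟩ := hq
      refine ⟨(x+1, c), ?_, ?_⟩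
      · simp only [Q, mem_filter, mem_product, mem_range]
        refine ⟨⟨⟨by omega, by omega⟩, by omega, by omega, ?_⟩, by omega⟩
        rw [show x + 1 + 3*c + i = x + 3*c + (i+1) by omega]
        exact hmod
      · show (x + 1 - 1, c) = (x, c)
        rw [show x + 1 - 1 = x by omega]
  -- left edge of class i
  have hedge0 : ((Q n m i).filter (fun p => p.1 = 0)).card = 2*t := by
    have himg : ((Q n m i).filter (fun p => p.1 = 0))
        = Finset.image (fun d => ((0:ℕ), d+1))
            ((range (m*(2*t))).filter (fun d => (3*d + (i+3)) % m = 0)) := by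
      ext ⟨y, c⟩
      simp only [Q, mem_filter, mem_product, mem_range, Finset.mem_image, Prod.mk.injEq]
      constructor
      · rintro ⟨⟨⟨hy, hc⟩, hc1, hle, hmod⟩, hy0⟩
        refine ⟨c - 1, ⟨by omega, ?_⟩, by omega, by omega⟩
        have h2 : y + 3*c + i = 3*(c-1) + (i+3) := by omega
        rw [h2] at hmod
        exact hmod
      · rintro ⟨d, ⟨hd, hmod⟩, h0, hc⟩
        have hdK : d < 2*K := by rw [hKdef]; omega
        refine ⟨⟨⟨by omega, by omega⟩, by omega, by omega, ?_⟩, by omega⟩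
        rw [show y + 3*c + i = 3*d + (i+3) by omega]
        exact hmod
    rw [himg, Finset.card_image_of_injective _ (fun a b h => by simp only [Prod.mk.injEq] at h; omega),
        count_sol m 3 (i+3) hm hnd3 (2*t)]
  -- right edge of class i+1
  have hedgeN : ((Q n m (i+1)).filter (fun p => ¬ (2*p.1+3*p.2+2 ≤ n))).card = 2*t := by
    rw [← Finset.card_filter_add_card_filter_not
        (s := (Q n m (i+1)).filter (fun p => ¬ (2*p.1+3*p.2+2 ≤ n))) (p := fun p => p.2 % 2 = 0)]
    have heven : (((Q n m (i+1)).filter (fun p => ¬ (2*p.1+3*p.2+2 ≤ n))).filter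
          (fun p => p.2 % 2 = 0))
        = Finset.image (fun d => (3*K - 3*d - 3, 2*d+2))
            ((range (m*t)).filter (fun d => (3*d + (i+4)) % m = 0)) := by
      ext ⟨y, c⟩
      simp only [Q, mem_filter, mem_product, mem_range, Finset.mem_image, Prod.mk.injEq]
      constructor
      · rintro ⟨⟨⟨⟨hy, hc⟩, hc1, hle, hmod⟩, hbig⟩, hpar⟩
        have heq : 2*y + 3*c = n := by omega
        refine ⟨c/2 - 1, ⟨by omega, ?_⟩, by omega, by omega⟩
        have h2 : y + 3*c + (i+1) = 3*K + (3*(c/2-1) + (i+4)) := by omega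
        rw [h2, hshift] at hmod
        exact hmod
      · rintro ⟨d, ⟨hd, hmod⟩, hyv, hcv⟩
        have hdK : d < K := by omega
        refine ⟨⟨⟨⟨by omega, by omega⟩, by omega, by omega, ?_⟩, by omega⟩, by omega⟩
        rw [show y + 3*c + (i+1) = 3*K + (3*d + (i+4)) by omega, hshift]
        exact hmod
    have hodd : (((Q n m (i+1)).filter (fun p => ¬ (2*p.1+3*p.2+2 ≤ n))).filter
          (fun p => ¬ p.2 % 2 = 0))
        = Finset.image (fun d => (3*K - 3*d - 2, 2*d+1))
            ((range (m*t)).filter (fun d => (3*d + (i+2)) % m = 0)) := by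
      ext ⟨y, c⟩
      simp only [Q, mem_filter, mem_product, mem_range, Finset.mem_image, Prod.mk.injEq]
      constructor
      · rintro ⟨⟨⟨⟨hy, hc⟩, hc1, hle, hmod⟩, hbig⟩, hpar⟩
        have heq : 2*y + 3*c = n - 1 := by omega
        refine ⟨c/2, ⟨by omega, ?_⟩, by omega, by omega⟩
        have h2 : y + 3*c + (i+1) = 3*K + (3*(c/2) + (i+2)) := by omega
        rw [h2, hshift] at hmod
        exact hmod
      · rintro ⟨d, ⟨hd, hmod⟩, hyv, hcv⟩
        have hdK : d < K := by omega
        refine ⟨⟨⟨⟨by omega, by omega⟩, by omega, by omega, ?_⟩, by omega⟩, by omega⟩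
        rw [show y + 3*c + (i+1) = 3*K + (3*d + (i+2)) by omega, hshift]
        exact hmod
    rw [heven, hodd,
        Finset.card_image_of_injective _ (fun a b h => by simp only [Prod.mk.injEq] at h; omega),
        Finset.card_image_of_injective _ (fun a b h => by simp only [Prod.mk.injEq] at h; omega),
        count_sol m 3 (i+4) hm hnd3 t, count_sol m 3 (i+2) hm hnd3 t]
    omega
  have hQ1 := Finset.card_filter_add_card_filter_not
      (s := Q n m i) (p := fun p => p.1 = 0)
  have hQ2 := Finset.card_filter_add_card_filter_not
      (s := Q n m (i+1)) (p := fun p => 2*p.1+3*p.2+2 ≤ n)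
  omega

theorem stmt13 (j m : ℕ) (hj : m = 6 * j - 1) (hm : m.Prime) (n : ℕ) (hn : 0 < n)
    (hmod : 6 * m ∣ n) (i : ℕ) (hi : i < m) :
    ((P3 n).filter (fun t => (t.1 - t.2.2) % m = i)).card = p3 n / m := by
  have hm2 := hm.two_le
  have hj1 : 1 ≤ j := by omega
  obtain ⟨t, ht⟩ := hmod
  have hmn : m ∣ n := ⟨6*t, by rw [ht]; ring⟩
  have hstep : ∀ i', (Q n m i').card = (Q n m (i'+1)).card := by
    intro i'
    rw [show n = 6*(m*t) by rw [ht]; ring]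
    exact step m j t i' hm hj hj1
  have hconst : ∀ i', (Q n m i').card = (Q n m 0).card := by
    intro i'
    induction i' with
    | zero => rfl
    | succ k ih => rw [← hstep k]; exact ih
  have hfib : (P3 n).card = ∑ i' ∈ range m, ((P3 n).filter (fun t => (t.1 - t.2.2) % m = i')).card := by
    apply Finset.card_eq_sum_card_fiberwise
    intro x _
    exact Finset.mem_range.mpr (Nat.mod_lt _ (by omega))
  have hsum : p3 n = m * (Q n m 0).card := by
    rw [p3, hfib]
    rw [Finset.sum_congr rfl (fun i' hi' => by
      rw [cardA n m i' (Finset.mem_range.mp hi') hmn, hconst i'])]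
    rw [Finset.sum_const, Finset.card_range, smul_eq_mul]
  rw [cardA n m i hi hmn, hconst i, hsum, Nat.mul_div_cancel_left _ (by omega : 0 < m)]
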